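/- arXiv:math/0501447 — 2 statements merged into one kernel-verified Lean document; each statement's English description precedes it below -/
import Mathlib

section
/- For every matrix A in SL(2, ℂ) there exist matrices X and Y in SL(2, ℂ) with trace X = 0, trace Y = 0, and A = X * Y. -/
open Matrix

lemma stmt_7_aux (A : Matrix.SpecialLinearGroup (Fin 2) ℂ) (x y z : ℂ)
    (hdet : x * (-x) - y * z = 1)
    (hcond : x * ((A : Matrix (Fin 2) (Fin 2) ℂ) 0 0 - (A : Matrix (Fin 2) (Fin 2) ℂ) 1 1)
      + y * (A : Matrix (Fin 2) (Fin 2) ℂ) 1 0 + z * (A : Matrix (Fin 2) (Fin 2) ℂ) 0 1 = 0) :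
    ∃ X Y : Matrix.SpecialLinearGroup (Fin 2) ℂ,
      Matrix.trace (X : Matrix (Fin 2) (Fin 2) ℂ) = 0 ∧
      Matrix.trace (Y : Matrix (Fin 2) (Fin 2) ℂ) = 0 ∧
      A = X * Y := by
  set X : Matrix.SpecialLinearGroup (Fin 2) ℂ :=
    ⟨!![x, y; z, -x], by simpa [Matrix.det_fin_two_of] using hdet⟩ with hX
  refine ⟨X, X⁻¹ * A, ?_, ?_, by group⟩
  · simp [hX, Matrix.trace_fin_two]
  · have hco : ((X⁻¹ * A : Matrix.SpecialLinearGroup (Fin 2) ℂ) : Matrix (Fin 2) (Fin 2) ℂ)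
        = (!![x, y; z, -x]).adjugate * (A : Matrix (Fin 2) (Fin 2) ℂ) := by
      rw [Matrix.SpecialLinearGroup.coe_mul]
      exact congrArg (· * (A : Matrix (Fin 2) (Fin 2) ℂ)) (Matrix.SpecialLinearGroup.coe_inv X)
    rw [hco, Matrix.adjugate_fin_two]
    simp only [Matrix.trace_fin_two, Matrix.mul_apply, Fin.sum_univ_two,
      Matrix.of_apply, Matrix.cons_val', Matrix.cons_val_zero, Matrix.cons_val_one,
      Matrix.head_cons, Matrix.head_fin_const, Matrix.empty_val',
      Matrix.cons_val_fin_one]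
    linear_combination -hcond

/-- Every element of `SL(2, ℂ)` is a product of two trace-zero elements
(the lifts of half-turns). -/
theorem stmt_7 (A : Matrix.SpecialLinearGroup (Fin 2) ℂ) :
    ∃ X Y : Matrix.SpecialLinearGroup (Fin 2) ℂ,
      Matrix.trace (X : Matrix (Fin 2) (Fin 2) ℂ) = 0 ∧
      Matrix.trace (Y : Matrix (Fin 2) (Fin 2) ℂ) = 0 ∧
      A = X * Y := by
  by_cases hc : (A : Matrix (Fin 2) (Fin 2) ℂ) 1 0 ≠ 0
  · refine stmt_7_aux A Complex.I
      (-Complex.I * ((A : Matrix (Fin 2) (Fin 2) ℂ) 0 0 - (A : Matrix (Fin 2) (Fin 2) ℂ) 1 1)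
        / (A : Matrix (Fin 2) (Fin 2) ℂ) 1 0) 0 (by simp [Complex.I_mul_I])
      (by field_simp; ring)
  · push_neg at hc
    by_cases hb : (A : Matrix (Fin 2) (Fin 2) ℂ) 0 1 ≠ 0
    · refine stmt_7_aux A Complex.I 0
        (-Complex.I * ((A : Matrix (Fin 2) (Fin 2) ℂ) 0 0 - (A : Matrix (Fin 2) (Fin 2) ℂ) 1 1)
          / (A : Matrix (Fin 2) (Fin 2) ℂ) 0 1) (by simp [Complex.I_mul_I])
        (by field_simp [hc]; ring)
    · push_neg at hb
      exact stmt_7_aux A 0 1 (-1) (by ring) (by rw [hb, hc]; ring)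
end

section
/- Let A and B be matrices in SL(2, ℂ) that have no common eigenvector in ℂ², i.e., there is no nonzero vector v ∈ ℂ² and scalars λ, μ ∈ ℂ with A·v = λ·v and B·v = μ·v. Then there exist matrices X, Y, Z in SL(2, ℂ) with trace X = 0, trace Y = 0, trace Z = 0, A = X * Y, and B = Z * Y. -/
open Matrix

private lemma sl2_inv_coe (Y : Matrix.SpecialLinearGroup (Fin 2) ℂ)
    (h : Matrix.trace (Y : Matrix (Fin 2) (Fin 2) ℂ) = 0) :
    ((Y⁻¹ : Matrix.SpecialLinearGroup (Fin 2) ℂ) : Matrix (Fin 2) (Fin 2) ℂ)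
      = -(Y : Matrix (Fin 2) (Fin 2) ℂ) := by
  rw [Matrix.SpecialLinearGroup.coe_inv,
    Matrix.adjugate_fin_two (Y : Matrix (Fin 2) (Fin 2) ℂ)]
  rw [Matrix.trace_fin_two] at h
  ext i j
  fin_cases i <;> fin_cases j <;>
    simp [Matrix.of_apply] <;> linear_combination h

/-- If `A, B ∈ SL(2, ℂ)` have no common eigenvector, then there are trace-zero
matrices `X, Y, Z ∈ SL(2, ℂ)` (lifts of half-turns) with `A = X·Y` and `B = Z·Y`. -/
theorem stmt_8 (A B : Matrix.SpecialLinearGroup (Fin 2) ℂ)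
    (h : ¬ ∃ (v : Fin 2 → ℂ) (lam mu : ℂ), v ≠ 0 ∧
        (A : Matrix (Fin 2) (Fin 2) ℂ).mulVec v = lam • v ∧
        (B : Matrix (Fin 2) (Fin 2) ℂ).mulVec v = mu • v) :
    ∃ X Y Z : Matrix.SpecialLinearGroup (Fin 2) ℂ,
      Matrix.trace (X : Matrix (Fin 2) (Fin 2) ℂ) = 0 ∧
      Matrix.trace (Y : Matrix (Fin 2) (Fin 2) ℂ) = 0 ∧
      Matrix.trace (Z : Matrix (Fin 2) (Fin 2) ℂ) = 0 ∧
      A = X * Y ∧ B = Z * Y := by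
  set Am : Matrix (Fin 2) (Fin 2) ℂ := (A : Matrix (Fin 2) (Fin 2) ℂ) with hAm
  set Bm : Matrix (Fin 2) (Fin 2) ℂ := (B : Matrix (Fin 2) (Fin 2) ℂ) with hBm
  -- Step 1: find a nonzero (a,b,c) with the two trace conditions
  set C : Matrix (Fin 2) (Fin 3) ℂ :=
    !![Am 0 0 - Am 1 1, Am 1 0, Am 0 1; Bm 0 0 - Bm 1 1, Bm 1 0, Bm 0 1] with hC
  have hker : (LinearMap.ker C.mulVecLin) ≠ ⊥ := by
    intro hbot
    have hinj : Function.Injective C.mulVecLin := LinearMap.ker_eq_bot.mp hbot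
    have h3 : Module.finrank ℂ (Fin 3 → ℂ) ≤ Module.finrank ℂ (Fin 2 → ℂ) :=
      LinearMap.finrank_le_finrank_of_injective hinj
    simp [Module.finrank_fin_fun] at h3
  obtain ⟨w, hw0, hwne⟩ := Submodule.ne_bot_iff _ |>.mp hker
  have hw0' : C.mulVec w = 0 := hw0
  set a := w 0 with ha; set b := w 1 with hb; set c := w 2 with hc
  have hA : (Am 0 0 - Am 1 1) * a + Am 1 0 * b + Am 0 1 * c = 0 := by
    have := congrFun hw0' 0
    simpa [hC, Matrix.mulVec, dotProduct, Fin.sum_univ_three, mul_comm,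
      ← ha, ← hb, ← hc] using this
  have hB : (Bm 0 0 - Bm 1 1) * a + Bm 1 0 * b + Bm 0 1 * c = 0 := by
    have := congrFun hw0' 1
    simpa [hC, Matrix.mulVec, dotProduct, Fin.sum_univ_three, mul_comm,
      ← ha, ← hb, ← hc] using this
  -- Step 2: the determinant -(a^2) - b*c is nonzero
  have hd : -(a ^ 2) - b * c ≠ 0 := by
    intro hd0
    have hd' : a ^ 2 = -(b * c) := by linear_combination -hd0
    apply h
    by_cases hcc : c = 0
    · -- then a = 0 and b ≠ 0; eigenvector ![1,0]
      have ha0 : a = 0 := by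
        have : a ^ 2 = 0 := by rw [hd', hcc]; ring
        exact (pow_eq_zero_iff two_ne_zero).mp this
      have hb0 : b ≠ 0 := by
        intro hb0
        apply hwne
        funext i
        fin_cases i
        · exact ha0
        · exact hb0
        · exact hcc
      refine ⟨![1, 0], Am 0 0, Bm 0 0, ?_, ?_, ?_⟩
      · intro h0
        have := congrFun h0 0
        simp at this
      · funext i
        have hr : Am 1 0 = 0 := by
          have : Am 1 0 * b = 0 := by linear_combination hA - (Am 0 0 - Am 1 1) * ha0 - Am 0 1 * hcc
          exact (mul_eq_zero.mp this).resolve_right hb0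
        fin_cases i <;>
          simp [Matrix.mulVec, dotProduct, Fin.sum_univ_two, hr]
      · funext i
        have hr : Bm 1 0 = 0 := by
          have : Bm 1 0 * b = 0 := by linear_combination hB - (Bm 0 0 - Bm 1 1) * ha0 - Bm 0 1 * hcc
          exact (mul_eq_zero.mp this).resolve_right hb0
        fin_cases i <;>
          simp [Matrix.mulVec, dotProduct, Fin.sum_univ_two, hr]
    · -- c ≠ 0; eigenvector ![a, c]
      refine ⟨![a, c], (Am 1 0 * a + Am 1 1 * c) / c, (Bm 1 0 * a + Bm 1 1 * c) / c, ?_, ?_, ?_⟩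
      · intro h0
        exact hcc (by simpa using congrFun h0 1)
      · funext i
        fin_cases i <;>
          simp only [Matrix.mulVec, dotProduct, Fin.sum_univ_two, Pi.smul_apply,
            Matrix.cons_val_zero, Matrix.cons_val_one, Matrix.head_cons, smul_eq_mul, Fin.zero_eta, Fin.mk_one]
        · field_simp
          ring_nf
          linear_combination c * hA - Am 1 0 * hd'
        · field_simp
      · funext i
        fin_cases i <;>
          simp only [Matrix.mulVec, dotProduct, Fin.sum_univ_two, Pi.smul_apply,
            Matrix.cons_val_zero, Matrix.cons_val_one, Matrix.head_cons, smul_eq_mul, Fin.zero_eta, Fin.mk_one]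
        · field_simp
          ring_nf
          linear_combination c * hB - Bm 1 0 * hd'
        · field_simp
  -- Step 3: scale to determinant 1
  obtain ⟨e, he⟩ := IsAlgClosed.exists_pow_nat_eq ((-(a ^ 2) - b * c)⁻¹) (n := 2) (by norm_num)
  set Ym : Matrix (Fin 2) (Fin 2) ℂ := e • !![a, b; c, -a] with hYm
  have hdetY : Ym.det = 1 := by
    rw [hYm, Matrix.det_smul, Matrix.det_fin_two_of]
    simp only [Fintype.card_fin, smul_eq_mul]
    rw [he]
    field_simp
  set Y : Matrix.SpecialLinearGroup (Fin 2) ℂ := ⟨Ym, hdetY⟩ with hY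
  have htrY : Matrix.trace (Y : Matrix (Fin 2) (Fin 2) ℂ) = 0 := by
    rw [Matrix.trace_fin_two]
    show Ym 0 0 + Ym 1 1 = 0
    simp [hYm]
  have hYinv : ((Y⁻¹ : Matrix.SpecialLinearGroup (Fin 2) ℂ) : Matrix (Fin 2) (Fin 2) ℂ)
      = -Ym := sl2_inv_coe Y htrY
  refine ⟨A * Y⁻¹, Y, B * Y⁻¹, ?_, htrY, ?_, (inv_mul_cancel_right A Y).symm,
    (inv_mul_cancel_right B Y).symm⟩
  · rw [Matrix.SpecialLinearGroup.coe_mul, hYinv]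
    simp only [Matrix.trace_fin_two, Matrix.mul_apply, Fin.sum_univ_two, hYm, Matrix.smul_apply,
      Matrix.neg_apply, Matrix.of_apply, Matrix.cons_val', Matrix.cons_val_zero,
      Matrix.cons_val_one, Matrix.head_cons, Matrix.head_fin_const, Matrix.empty_val',
      Matrix.cons_val_fin_one, smul_eq_mul, ← hAm]
    linear_combination -e * hA
  · rw [Matrix.SpecialLinearGroup.coe_mul, hYinv]
    simp only [Matrix.trace_fin_two, Matrix.mul_apply, Fin.sum_univ_two, hYm, Matrix.smul_apply,
      Matrix.neg_apply, Matrix.of_apply, Matrix.cons_val', Matrix.cons_val_zero,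
      Matrix.cons_val_one, Matrix.head_cons, Matrix.head_fin_const, Matrix.empty_val',
      Matrix.cons_val_fin_one, smul_eq_mul, ← hBm]
    linear_combination -e * hB
end
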